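/- arXiv:0802.2592 — 5 statements merged into one kernel-verified Lean document; each statement's English description precedes it below -/
import Mathlib

section
/- For x ∈ W^{n+1} = {x ∈ ℤ^{n+1} : x_1 < ... < x_{n+1}}, define W^n(x) = {y ∈ ℤ^n : x_1 ≤ y_1 < x_2 ≤ y_2 < ... ≤ y_n < x_{n+1}} and λ^n(x,y) = n! · h_n(y)/h_{n+1}(x), where h_m(z) = Π_{i<j}(z_j − z_i). Then Σ_{y ∈ W^n(x)} λ^n(x,y) = 1, i.e., λ^n(x,·) is a probability measure on W^n(x). -/
open Matrix BigOperators

/-- Kronecker delta `δ_i : ℤ → ℝ`. -/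
noncomputable def deltaK (i : ℤ) : ℤ → ℝ := fun x => if x = i then 1 else 0

/-- Convolution `(f * g)(x) = Σ_{s+t=x} f(s) g(t)`. -/
noncomputable def conv (f g : ℤ → ℝ) : ℤ → ℝ := fun x => ∑' s : ℤ, f s * g (x - s)

/-- The Bernoulli(1/2) step distribution `φ = (δ_0 + δ_1)/2`. -/
noncomputable def phiB : ℤ → ℝ := fun x => (deltaK 0 x + deltaK 1 x) / 2

/-- `t`-fold convolution power of `φ`. -/
noncomputable def phiPow : ℕ → ℤ → ℝ
  | 0 => deltaK 0
  | (n+1) => conv (phiPow n) phiB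

/-- `Δ⁻¹ f (x) = Σ_{z ≤ x} f(z)`. -/
noncomputable def Dinv (f : ℤ → ℝ) (x : ℤ) : ℝ := ∑' z : {z : ℤ // z ≤ x}, f z.1

/-- Backward difference `Δ f (x) = f(x) - f(x-1)`. -/
noncomputable def Dd (f : ℤ → ℝ) (x : ℤ) : ℝ := f x - f (x - 1)

/-- Vandermonde product `h_n(z) = Π_{i<j} (z_j - z_i)` (real valued). -/
noncomputable def vand (n : ℕ) (z : Fin n → ℤ) : ℝ :=
  ∏ i : Fin n, ∏ j ∈ Finset.Ioi i, ((z j - z i : ℤ) : ℝ)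

/-- The interlacing cone `W^{n+1,n}`: `x_1 ≤ y_1 < x_2 ≤ … ≤ y_n < x_{n+1}`. -/
def interlace (n : ℕ) (x : Fin (n+1) → ℤ) (y : Fin n → ℤ) : Prop :=
  ∀ i : Fin n, x i.castSucc ≤ y i ∧ y i < x i.succ

/-- The determinantal kernel `q_t^n((x,y),(x',y'))` (rows indexed by the starting
point `(x,y)`, columns by the end point `(x',y')`). -/
noncomputable def qker (n t : ℕ) (x : Fin (n+1) → ℤ) (y : Fin n → ℤ)
    (x' : Fin (n+1) → ℤ) (y' : Fin n → ℤ) : ℝ :=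
  (Matrix.fromBlocks
    (Matrix.of fun i j : Fin (n+1) => phiPow t (x' j - x i))
    (Matrix.of fun (i : Fin (n+1)) (j : Fin n) =>
      Dinv (phiPow t) (y' j - x i) - if (i : ℕ) ≤ (j : ℕ) then 1 else 0)
    (Matrix.of fun (i : Fin n) (j : Fin (n+1)) => Dd (phiPow t) (x' j - y i))
    (Matrix.of fun i j : Fin n => phiPow t (y' j - y i))).det

/-- `λ^n(x,y) = n! h_n(y)/h_{n+1}(x)`. -/
noncomputable def lam (n : ℕ) (x : Fin (n+1) → ℤ) (y : Fin n → ℤ) : ℝ :=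
  (n.factorial : ℝ) * vand n y / vand (n+1) x

/-- `p_t^{n,+}(y,y') = (h_n(y')/h_n(y)) det[φ^{(t)}(y'_j - y_i)]`. -/
noncomputable def pplus (n t : ℕ) (y y' : Fin n → ℤ) : ℝ :=
  (vand n y' / vand n y) * (Matrix.of fun i j : Fin n => phiPow t (y' j - y i)).det

/-! ### Auxiliary material for the proof -/

/-- Real-valued falling factorial `t(t-1)...(t-k+1)`. -/
noncomputable def ffr (k : ℕ) (t : ℤ) : ℝ := ∏ m ∈ Finset.range k, ((t : ℝ) - (m : ℝ))

lemma ffr_zero (t : ℤ) : ffr 0 t = 1 := by simp [ffr]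

lemma ffr_step (k : ℕ) (t : ℤ) :
    ffr (k+1) (t+1) - ffr (k+1) t = ((k:ℝ)+1) * ffr k t := by
  have h1 : ffr (k+1) (t+1) = ((t:ℝ)+1) * ffr k t := by
    rw [ffr, Finset.prod_range_succ']
    have : ∀ m ∈ Finset.range k, (((t+1 : ℤ) : ℝ) - ((m+1 : ℕ) : ℝ)) = ((t:ℝ) - (m:ℝ)) := by
      intro m _; push_cast; ring
    rw [Finset.prod_congr rfl this]
    rw [ffr]; push_cast; ring
  have h2 : ffr (k+1) t = ffr k t * ((t:ℝ) - (k:ℝ)) := by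
    rw [ffr, Finset.prod_range_succ, ffr]
  rw [h1, h2]; ring

lemma sum_ffr_mul (k : ℕ) (a b : ℤ) (hab : a ≤ b) :
    (∑ t ∈ Finset.Ico a b, ffr k t) * ((k:ℝ)+1) = ffr (k+1) b - ffr (k+1) a := by
  refine Int.le_induction (m := a)
    (motive := fun b _ => (∑ t ∈ Finset.Ico a b, ffr k t) * ((k:ℝ)+1) = ffr (k+1) b - ffr (k+1) a)
    (by simp) ?_ b hab
  intro b hb ih
  have hins : Finset.Ico a (b+1) = insert b (Finset.Ico a b) := by
    ext t
    simp only [Finset.mem_Ico, Finset.mem_insert]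
    omega
  rw [hins, Finset.sum_insert (by simp), add_mul, ih]
  linear_combination -ffr_step k b

/-- Monic polynomial of degree `k` evaluating to `ffr k`. -/
noncomputable def fpoly (k : ℕ) : Polynomial ℝ :=
  ∏ m ∈ Finset.range k, (Polynomial.X - Polynomial.C (m : ℝ))

lemma fpoly_monic (k : ℕ) : (fpoly k).Monic :=
  Polynomial.monic_prod_of_monic _ _ fun i _ => Polynomial.monic_X_sub_C _

lemma fpoly_natDegree (k : ℕ) : (fpoly k).natDegree = k := by
  rw [fpoly, Polynomial.natDegree_prod]
  · trans ∑ _m ∈ Finset.range k, 1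
    · exact Finset.sum_congr rfl fun m _ => Polynomial.natDegree_X_sub_C _
    · simp
  · intro i _; exact (Polynomial.monic_X_sub_C _).ne_zero

lemma fpoly_eval (k : ℕ) (t : ℤ) : (fpoly k).eval (t : ℝ) = ffr k t := by
  simp [fpoly, ffr, Polynomial.eval_prod]

lemma vand_eq_det (n : ℕ) (z : Fin n → ℤ) :
    vand n z = (Matrix.of fun i j : Fin n => ffr j (z i)).det := by
  have h1 : vand n z = (Matrix.vandermonde fun i => ((z i : ℤ) : ℝ)).det := by
    rw [Matrix.det_vandermonde, vand]
    apply Finset.prod_congr rfl; intro i _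
    apply Finset.prod_congr rfl; intro j _
    push_cast; ring
  rw [h1, Matrix.det_eval_matrixOfPolynomials_eq_det_vandermonde _ (fun j : Fin n => fpoly j)
    (fun j => fpoly_natDegree j) (fun j => fpoly_monic j)]
  congr 1; ext i j
  simp [fpoly_eval]

lemma vand_pos {n : ℕ} {z : Fin n → ℤ} (hz : StrictMono z) : 0 < vand n z := by
  apply Finset.prod_pos; intro i _
  apply Finset.prod_pos; intro j hj
  have hij : i < j := Finset.mem_Ioi.mp hj
  have : (0 : ℤ) < z j - z i := by have := hz hij; omega
  exact_mod_cast this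

lemma det_diff {n : ℕ} (B : Matrix (Fin (n+1)) (Fin (n+1)) ℝ) (hB : ∀ i, B i 0 = 1) :
    (Matrix.of fun i j : Fin n => B i.succ j.succ - B i.castSucc j.succ).det = B.det := by
  classical
  set L : Matrix (Fin (n+1)) (Fin (n+1)) ℝ :=
    Matrix.of fun i j => (if i = j then (1:ℝ) else 0) +
      (if (j : ℕ) + 1 = (i : ℕ) then (-1:ℝ) else 0) with hL
  have mul0 : ∀ k, (L * B) 0 k = B 0 k := by
    intro k
    have hfalse : ∀ j : Fin (n+1), ¬((j : ℕ) + 1 = ((0 : Fin (n+1)) : ℕ)) := by simp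
    simp only [Matrix.mul_apply, hL, Matrix.of_apply, add_mul, ite_mul, one_mul, zero_mul,
      neg_one_mul]
    rw [Finset.sum_add_distrib]
    rw [Finset.sum_congr rfl (fun j _ => if_neg (hfalse j))]
    rw [Finset.sum_ite_eq Finset.univ (0 : Fin (n+1)) (fun j => B j k)]
    simp
  have mulS : ∀ (i : Fin n) (k : Fin (n+1)),
      (L * B) i.succ k = B i.succ k - B i.castSucc k := by
    intro i k
    simp only [Matrix.mul_apply, hL, Matrix.of_apply, add_mul, ite_mul, one_mul, zero_mul,
      neg_one_mul]
    rw [Finset.sum_add_distrib]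
    rw [Finset.sum_ite_eq Finset.univ (i.succ) (fun j => B j k)]
    rw [Finset.sum_eq_single i.castSucc]
    · rw [if_pos (by simp), if_pos (by simp [Fin.val_succ])]
      ring
    · intro b _ hb
      rw [if_neg]
      intro h
      apply hb
      apply Fin.ext
      simp only [Fin.val_succ] at h
      simp [Fin.coe_castSucc]
      omega
    · simp
  have hdetL : L.det = 1 := by
    have htri : L.BlockTriangular OrderDual.toDual := by
      intro i j hij
      have hij' : i < j := hij
      have h1 : ¬ (i = j) := ne_of_lt hij'
      have h2 : ¬ ((j : ℕ) + 1 = (i : ℕ)) := by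
        have : (i : ℕ) < (j : ℕ) := hij'
        omega
      simp [hL, h1, h2]
    rw [Matrix.det_of_lowerTriangular L htri]
    apply Finset.prod_eq_one
    intro i _
    simp [hL]
  have hLB : (L * B).det = B.det := by rw [Matrix.det_mul, hdetL, one_mul]
  rw [← hLB, Matrix.det_succ_column_zero]
  rw [Finset.sum_eq_single (0 : Fin (n+1))]
  · rw [mul0, hB]
    simp only [Fin.val_zero, pow_zero, one_mul, mul_one]
    congr 1
    ext i j
    simp only [Matrix.submatrix_apply, Fin.succAbove_zero, Matrix.of_apply]
    rw [mulS]
  · intro i _ hi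
    obtain ⟨i', rfl⟩ := Fin.exists_succ_eq.mpr hi
    rw [mulS, hB, hB]
    ring
  · simp

lemma prod_range_cast_factorial (m : ℕ) :
    ∏ j ∈ Finset.range m, ((j : ℝ) + 1) = (m.factorial : ℝ) := by
  induction m with
  | zero => simp
  | succ m ih =>
    rw [Finset.prod_range_succ, ih, Nat.factorial_succ]
    push_cast; ring

lemma key_sum (n : ℕ) (x : Fin (n+1) → ℤ) (hx : StrictMono x) :
    (n.factorial : ℝ) *
      ∑ y ∈ Fintype.piFinset (fun i : Fin n => Finset.Ico (x i.castSucc) (x i.succ)),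
        vand n y = vand (n+1) x := by
  classical
  set A : Fin n → Finset ℤ := fun i => Finset.Ico (x i.castSucc) (x i.succ) with hA
  have h0 : ∀ y : Fin n → ℤ, vand n y = (Matrix.of fun i j : Fin n => ffr j (y i)).det :=
    fun y => vand_eq_det n y
  have h1 : ∑ y ∈ Fintype.piFinset A, vand n y
      = (Matrix.of fun i j : Fin n => ∑ t ∈ A i, ffr j t).det := by
    rw [Finset.sum_congr rfl (fun y _ => h0 y)]
    have hm := Matrix.detRowAlternating.toMultilinearMap.map_sum_finset
      (g := fun (i : Fin n) (t : ℤ) => (fun j : Fin n => ffr j t)) (A := A)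
    have hrow : (fun (i : Fin n) => ∑ t ∈ A i, (fun j : Fin n => ffr j t))
        = Matrix.of fun (i : Fin n) (j : Fin n) => ∑ t ∈ A i, ffr j t := by
      funext i j
      simp
    rw [hrow] at hm
    exact hm.symm
  rw [h1]
  have h2 : (n.factorial : ℝ) * (Matrix.of fun i j : Fin n => ∑ t ∈ A i, ffr j t).det
      = (Matrix.of fun i j : Fin n =>
          ffr ((j : ℕ)+1) (x i.succ) - ffr ((j : ℕ)+1) (x i.castSucc)).det := by
    have hfact : (n.factorial : ℝ) = ∏ j : Fin n, ((j : ℝ) + 1) := by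
      rw [Fin.prod_univ_eq_prod_range (fun j : ℕ => ((j : ℝ) + 1)) n,
        prod_range_cast_factorial]
    rw [hfact, ← Matrix.det_mul_row]
    congr 1
    ext i j
    simp only [Matrix.of_apply]
    rw [mul_comm]
    exact sum_ffr_mul j _ _ (le_of_lt (hx Fin.castSucc_lt_succ))
  rw [h2]
  have h3 := det_diff (Matrix.of fun i j : Fin (n+1) => ffr j (x i)) (fun i => by
    simp [ffr_zero])
  have h4 : (Matrix.of fun i j : Fin n =>
      ffr ((j : ℕ)+1) (x i.succ) - ffr ((j : ℕ)+1) (x i.castSucc))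
      = (Matrix.of fun i j : Fin n =>
        (Matrix.of fun i j : Fin (n+1) => ffr j (x i)) i.succ j.succ -
        (Matrix.of fun i j : Fin (n+1) => ffr j (x i)) i.castSucc j.succ) := by
    ext i j
    simp [Fin.val_succ]
  rw [h4, h3, ← vand_eq_det]


/-- `λ^n(x,·)` is a probability measure on `W^n(x)`. -/
theorem lam_sums_to_one (n : ℕ) (x : Fin (n+1) → ℤ) (hx : StrictMono x) :
    ∑' y : {y : Fin n → ℤ // interlace n x y}, lam n x y.1 = 1 := by
  classical
  set A : Fin n → Finset ℤ := fun i => Finset.Ico (x i.castSucc) (x i.succ) with hA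
  have hmem : ∀ y : Fin n → ℤ, interlace n x y ↔ y ∈ Fintype.piFinset A := by
    intro y
    rw [Fintype.mem_piFinset]
    constructor
    · intro h i; exact Finset.mem_Ico.mpr (h i)
    · intro h i; exact Finset.mem_Ico.mp (h i)
  rw [← Equiv.tsum_eq
    ((⟨fun a => ⟨a.1, (hmem a.1).mpr a.2⟩, fun y => ⟨y.1, (hmem y.1).mp y.2⟩,
      fun a => rfl, fun y => rfl⟩ :
      {y : Fin n → ℤ // y ∈ Fintype.piFinset A} ≃ {y : Fin n → ℤ // interlace n x y}))
    (fun y => lam n x y.1)]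
  rw [tsum_fintype]
  change ∑ a : {y : Fin n → ℤ // y ∈ Fintype.piFinset A}, lam n x a.1 = 1
  rw [Finset.sum_coe_sort (Fintype.piFinset A) (lam n x)]
  have hpos := vand_pos (n := n+1) hx
  have hkey := key_sum n x hx
  simp only [lam]
  rw [← Finset.sum_div, ← Finset.mul_sum, hkey]
  exact div_self (ne_of_gt hpos)
end

section
/- For x^n ∈ ℝ^n with x^n_1 < ... < x^n_n, the (n(n−1)/2)-dimensional Lebesgue volume of the set K(x^n) of tuples (x^1, ..., x^{n−1}) with x^k ∈ ℝ^k satisfying x^{k+1}_i ≤ x^k_i ≤ x^{k+1}_{i+1} for all applicable i, k, equals h_n(x^n) / Π_{k=1}^{n−1} k!, where h_n(x) = Π_{i<j}(x_j − x_i). -/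
open Matrix MeasureTheory

/-- Vandermonde product `h_n(z) = Π_{i<j}(z_j - z_i)` (real arguments). -/
noncomputable def vandR (n : ℕ) (z : Fin n → ℝ) : ℝ :=
  ∏ i : Fin n, ∏ j ∈ Finset.Ioi i, (z j - z i)

/-- Full row `j` (for `j ≤ m`) of an interlacing array with prescribed top row:
rows `j < m` come from `X` and row `m` is `top`.  Row `j` represents `x^{j+1}`. -/
def GTrow {α : Type*} (m : ℕ) (top : Fin (m+1) → α)
    (X : (k : Fin m) → Fin ((k : ℕ)+1) → α) (j : ℕ) (hj : j < m + 1) :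
    Fin (j+1) → α :=
  if h : j < m then X ⟨j, h⟩ else fun i => top (Fin.cast (by omega) i)

/-- The continuous Gelfand–Tsetlin polytope `K(x^n)` with top row `top` (weak
interlacing `x^{k+1}_i ≤ x^k_i ≤ x^{k+1}_{i+1}`), `n = m+1`. -/
def GTpolytope (m : ℕ) (top : Fin (m+1) → ℝ) :
    Set ((k : Fin m) → Fin ((k : ℕ)+1) → ℝ) :=
  {X | ∀ (k : ℕ) (hk : k < m) (i : Fin (k+1)),
      GTrow m top X (k+1) (by omega) i.castSucc ≤ GTrow m top X k (by omega) i ∧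
      GTrow m top X k (by omega) i ≤ GTrow m top X (k+1) (by omega) i.succ}

/-! ### Auxiliary lemmas: the Vandermonde integral -/

lemma int_pow_Icc (a b : ℝ) (hab : a ≤ b) (k : ℕ) :
    ∫ t in Set.Icc a b, t ^ k = (b ^ (k+1) - a ^ (k+1)) / (k+1) := by
  rw [MeasureTheory.integral_Icc_eq_integral_Ioc, ← intervalIntegral.integral_of_le hab,
    integral_pow]

lemma vandR_eq_det (n : ℕ) (y : Fin n → ℝ) :
    vandR n y = (Matrix.of fun i j : Fin n => y j ^ (i:ℕ)).det := by
  rw [show (Matrix.of fun i j : Fin n => y j ^ (i:ℕ)) = (Matrix.vandermonde y)ᵀ from rfl,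
    Matrix.det_transpose, Matrix.det_vandermonde, vandR]

lemma det_diff_matrix (n : ℕ) (top : Fin (n+1) → ℝ) :
    (Matrix.of fun i j : Fin n => top j.succ ^ ((i:ℕ)+1) - top j.castSucc ^ ((i:ℕ)+1)).det
      = vandR (n+1) top := by
  classical
  set W : Matrix (Fin (n+1)) (Fin (n+1)) ℝ := Matrix.of (fun i j => top j ^ (i:ℕ)) with hW
  set U : Matrix (Fin (n+1)) (Fin (n+1)) ℝ :=
    Matrix.of (fun k l => (if k = l then (1:ℝ) else 0) + (if (k:ℕ)+1 = (l:ℕ) then (-1:ℝ) else 0))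
    with hU
  have hUtri : U.BlockTriangular id := by
    intro k l hlt
    have h1 : ¬ (k = l) := by rintro rfl; exact lt_irrefl _ hlt
    have h2 : ¬ ((k:ℕ)+1 = (l:ℕ)) := by
      have : (l:ℕ) < (k:ℕ) := hlt
      omega
    simp [hU, h1, h2]
  have hUdet : U.det = 1 := by
    rw [Matrix.det_of_upperTriangular hUtri]
    simp [hU, Finset.prod_ite_eq]
  have hM0 : ∀ i : Fin (n+1), (W * U) i 0 = top 0 ^ (i:ℕ) := by
    intro i
    simp only [Matrix.mul_apply, hU, hW, Matrix.of_apply, mul_add, mul_ite, mul_one, mul_zero,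
      mul_neg, Finset.sum_add_distrib]
    rw [Finset.sum_ite_eq' Finset.univ (0 : Fin (n+1)) (fun k => top k ^ (i:ℕ))]
    simp
  have hMs : ∀ (i : Fin (n+1)) (j : Fin n), (W * U) i j.succ
      = top j.succ ^ (i:ℕ) - top j.castSucc ^ (i:ℕ) := by
    intro i j
    have hcond : ∀ k : Fin (n+1), ((k:ℕ)+1 = ((j.succ : Fin (n+1)):ℕ)) ↔ (k = j.castSucc) := by
      intro k
      rw [Fin.ext_iff]
      simp [Fin.val_succ]
    simp only [Matrix.mul_apply, hU, hW, Matrix.of_apply, mul_add, mul_ite, mul_one, mul_zero,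
      mul_neg, Finset.sum_add_distrib]
    rw [Finset.sum_ite_eq' Finset.univ (j.succ : Fin (n+1)) (fun k => top k ^ (i:ℕ))]
    have : ∀ k : Fin (n+1), (if (k:ℕ)+1 = ((j.succ : Fin (n+1)):ℕ) then -(top k ^ (i:ℕ)) else 0)
        = (if k = j.castSucc then -(top k ^ (i:ℕ)) else 0) := by
      intro k; simp only [hcond]
    rw [Finset.sum_congr rfl (fun k _ => this k),
      Finset.sum_ite_eq' Finset.univ (j.castSucc) (fun k => -(top k ^ (i:ℕ)))]
    simp [sub_eq_add_neg]
  have hsub : (W * U).submatrix Fin.succ (Fin.succ : Fin n → Fin (n+1))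
      = Matrix.of (fun i j : Fin n => top j.succ ^ ((i:ℕ)+1) - top j.castSucc ^ ((i:ℕ)+1)) := by
    ext i j
    simp only [Matrix.submatrix_apply, Fin.zero_succAbove, hMs, Fin.val_succ, Matrix.of_apply]
  have hdet : (W * U).det = (Matrix.of (fun i j : Fin n =>
      top j.succ ^ ((i:ℕ)+1) - top j.castSucc ^ ((i:ℕ)+1))).det := by
    rw [Matrix.det_succ_row_zero]
    rw [Finset.sum_eq_single (0 : Fin (n+1))]
    · rw [hM0]
      simp [hsub]
    · intro j _ hj
      obtain ⟨j', rfl⟩ := Fin.eq_succ_of_ne_zero hj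
      rw [hMs]
      simp
    · simp
  have hWv : vandR (n+1) top = W.det := by
    rw [vandR_eq_det]
  rw [← hdet, Matrix.det_mul, hUdet, mul_one, hWv]

lemma integral_vandR_box (n : ℕ) (top : Fin (n+1) → ℝ) (h : Monotone top) :
    ∫ y in Set.pi Set.univ (fun j : Fin n => Set.Icc (top j.castSucc) (top j.succ)), vandR n y
      = vandR (n+1) top / (n.factorial : ℝ) := by
  classical
  have hab : ∀ j : Fin n, top j.castSucc ≤ top j.succ := fun j => h (Fin.castSucc_lt_succ : j.castSucc < j.succ).le
  set box := Set.pi Set.univ (fun j : Fin n => Set.Icc (top j.castSucc) (top j.succ)) with hbox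
  have hboxm : MeasurableSet box := MeasurableSet.univ_pi fun j => measurableSet_Icc
  have hv : ∀ y : Fin n → ℝ, vandR n y
      = ∑ σ : Equiv.Perm (Fin n), ((Equiv.Perm.sign σ : ℤ) : ℝ) * ∏ j, y j ^ ((σ j : ℕ)) := by
    intro y
    rw [vandR_eq_det, Matrix.det_apply']
    rfl
  have hprod : ∀ σ : Equiv.Perm (Fin n), ∫ y in box, ∏ j, (y j) ^ ((σ j : ℕ))
      = ∏ j, ((top j.succ ^ ((σ j : ℕ)+1) - top j.castSucc ^ ((σ j : ℕ)+1)) / ((σ j : ℕ)+1)) := by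
    intro σ
    rw [← MeasureTheory.integral_indicator hboxm]
    have hind : box.indicator (fun y => ∏ j, (y j)^((σ j : ℕ)))
        = fun y => ∏ j, (Set.Icc (top j.castSucc) (top j.succ)).indicator
            (fun t => t ^ ((σ j : ℕ))) (y j) := by
      funext y
      by_cases hy : y ∈ box
      · rw [Set.indicator_of_mem hy]
        exact Finset.prod_congr rfl fun j _ =>
          (Set.indicator_of_mem (hy j (Set.mem_univ j)) _).symm
      · rw [Set.indicator_of_notMem hy]
        have hy' : ¬ ∀ j, y j ∈ Set.Icc (top j.castSucc) (top j.succ) :=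
          fun hall => hy (Set.mem_univ_pi.2 hall)
        push_neg at hy'
        obtain ⟨j, hj⟩ := hy'
        symm
        apply Finset.prod_eq_zero (Finset.mem_univ j)
        rw [Set.indicator_of_notMem hj]
    rw [hind, volume_pi, MeasureTheory.integral_fintype_prod_eq_prod
      (f := fun (j : Fin n) (t : ℝ) => (Set.Icc (top j.castSucc) (top j.succ)).indicator
        (fun t => t ^ ((σ j : ℕ))) t)]
    refine Finset.prod_congr rfl fun j _ => ?_
    rw [MeasureTheory.integral_indicator measurableSet_Icc, int_pow_Icc _ _ (hab j)]
  have hint : ∀ σ : Equiv.Perm (Fin n), IntegrableOn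
      (fun y : Fin n → ℝ => ((Equiv.Perm.sign σ : ℤ) : ℝ) * ∏ j, y j ^ ((σ j : ℕ))) box := by
    intro σ
    have hc : Continuous (fun y : Fin n → ℝ =>
        ((Equiv.Perm.sign σ : ℤ) : ℝ) * ∏ j, y j ^ ((σ j : ℕ))) :=
      continuous_const.mul (continuous_finset_prod _ fun j _ => (continuous_apply j).pow _)
    exact hc.continuousOn.integrableOn_compact (isCompact_univ_pi fun j => isCompact_Icc)
  calc ∫ y in box, vandR n y
      = ∫ y in box, ∑ σ : Equiv.Perm (Fin n),
          ((Equiv.Perm.sign σ : ℤ) : ℝ) * ∏ j, y j ^ ((σ j : ℕ)) := by simp_rw [hv]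
    _ = ∑ σ : Equiv.Perm (Fin n), ∫ y in box,
          ((Equiv.Perm.sign σ : ℤ) : ℝ) * ∏ j, y j ^ ((σ j : ℕ)) :=
        MeasureTheory.integral_finset_sum _ fun σ _ => hint σ
    _ = ∑ σ : Equiv.Perm (Fin n), ((Equiv.Perm.sign σ : ℤ) : ℝ) *
          ∏ j, ((top j.succ ^ ((σ j : ℕ)+1) - top j.castSucc ^ ((σ j : ℕ)+1)) / ((σ j : ℕ)+1)) := by
        refine Finset.sum_congr rfl fun σ _ => ?_
        rw [MeasureTheory.integral_const_mul, hprod σ]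
    _ = (Matrix.of fun i j : Fin n =>
          ((top j.succ ^ ((i : ℕ)+1) - top j.castSucc ^ ((i : ℕ)+1)) / ((i : ℕ)+1))).det := by
        rw [Matrix.det_apply']
        rfl
    _ = vandR (n+1) top / (n.factorial : ℝ) := by
        have hfact : (Matrix.of fun i j : Fin n =>
            ((top j.succ ^ ((i : ℕ)+1) - top j.castSucc ^ ((i : ℕ)+1)) / ((i : ℕ)+1)))
          = Matrix.diagonal (fun i : Fin n => (((i : ℕ)+1 : ℝ))⁻¹) *
            (Matrix.of fun i j : Fin n =>
              top j.succ ^ ((i : ℕ)+1) - top j.castSucc ^ ((i : ℕ)+1)) := by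
          ext i j
          rw [Matrix.diagonal_mul]
          simp [div_eq_inv_mul]
        rw [hfact, Matrix.det_mul, Matrix.det_diagonal, det_diff_matrix]
        have hprodinv : ∏ i : Fin n, (((i : ℕ)+1 : ℝ))⁻¹ = ((n.factorial : ℝ))⁻¹ := by
          rw [Finset.prod_inv_distrib]
          congr 1
          rw [Fin.prod_univ_eq_prod_range (fun i => ((i : ℕ)+1 : ℝ))]
          push_cast [← Finset.prod_range_add_one_eq_factorial]
          rfl
        rw [hprodinv, inv_mul_eq_div]

/-! ### Auxiliary lemmas: measure theory -/

lemma measurePreserving_piCongrRight' {ι : Type*} [Fintype ι] {β β' : ι → Type*}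
    [∀ i, MeasurableSpace (β i)] [∀ i, MeasurableSpace (β' i)]
    (μ : ∀ i, Measure (β i)) (ν : ∀ i, Measure (β' i))
    [∀ i, SigmaFinite (μ i)] [∀ i, SigmaFinite (ν i)]
    (e : ∀ i, β i ≃ᵐ β' i) (he : ∀ i, MeasurePreserving (e i) (μ i) (ν i)) :
    MeasurePreserving (MeasurableEquiv.piCongrRight e) (Measure.pi μ) (Measure.pi ν) := by
  refine ⟨(MeasurableEquiv.piCongrRight e).measurable, ?_⟩
  refine (Measure.pi_eq (μ := ν) fun s hs => ?_).symm
  rw [MeasurableEquiv.map_apply]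
  have hpre : (MeasurableEquiv.piCongrRight e) ⁻¹' (Set.pi Set.univ s)
      = Set.pi Set.univ (fun i => (e i) ⁻¹' (s i)) := by
    rfl
  rw [hpre, Measure.pi_pi]
  exact Finset.prod_congr rfl fun i _ => (he i).measure_preimage (hs i).nullMeasurableSet

lemma GT_apply_congr {M : ℕ} (X : (k : Fin M) → Fin ((k:ℕ)+1) → ℝ) {a b : Fin M}
    (hab : (a:ℕ) = (b:ℕ)) {i : Fin ((a:ℕ)+1)} {i' : Fin ((b:ℕ)+1)} (hi : (i:ℕ) = (i':ℕ)) :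
    X a i = X b i' := by
  obtain rfl : a = b := Fin.ext hab
  obtain rfl : i = i' := Fin.ext hi
  rfl

lemma measurable_GTrow_pair (m j : ℕ) (hj : j < m+1) (i : Fin (j+1)) :
    Measurable (fun p : (Fin (m+1) → ℝ) × ((k : Fin m) → Fin ((k:ℕ)+1) → ℝ) =>
      GTrow m p.1 p.2 j hj i) := by
  unfold GTrow
  split_ifs with hlt
  · exact (measurable_pi_apply i).comp
      ((measurable_pi_apply (⟨j, hlt⟩ : Fin m)).comp measurable_snd)
  · exact (measurable_pi_apply _).comp measurable_fst

lemma measurableSet_GTpair (m : ℕ) :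
    MeasurableSet {p : (Fin (m+1) → ℝ) × ((k : Fin m) → Fin ((k:ℕ)+1) → ℝ) |
      p.2 ∈ GTpolytope m p.1} := by
  have hset : {p : (Fin (m+1) → ℝ) × ((k : Fin m) → Fin ((k:ℕ)+1) → ℝ) |
      p.2 ∈ GTpolytope m p.1} =
      ⋂ (k : Fin m), ⋂ (i : Fin ((k:ℕ)+1)),
        ({p : (Fin (m+1) → ℝ) × ((k : Fin m) → Fin ((k:ℕ)+1) → ℝ) |
            GTrow m p.1 p.2 ((k:ℕ)+1) (by omega) i.castSucc
              ≤ GTrow m p.1 p.2 (k:ℕ) (by omega) i}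
        ∩ {p : (Fin (m+1) → ℝ) × ((k : Fin m) → Fin ((k:ℕ)+1) → ℝ) |
            GTrow m p.1 p.2 (k:ℕ) (by omega) i ≤ GTrow m p.1 p.2 ((k:ℕ)+1) (by omega) i.succ}) := by
    ext p
    simp only [Set.mem_iInter, Set.mem_inter_iff, Set.mem_setOf_eq, GTpolytope]
    constructor
    · intro hp k i; exact hp (k:ℕ) k.isLt i
    · intro hp k hk i; exact hp ⟨k, hk⟩ i
  rw [hset]
  exact MeasurableSet.iInter fun k => MeasurableSet.iInter fun i =>
    ((measurableSet_le (measurable_GTrow_pair _ _ _ _) (measurable_GTrow_pair _ _ _ _)).inter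
     (measurableSet_le (measurable_GTrow_pair _ _ _ _) (measurable_GTrow_pair _ _ _ _)))

lemma measurableSet_GT (m : ℕ) (top : Fin (m+1) → ℝ) : MeasurableSet (GTpolytope m top) := by
  have h : GTpolytope m top = (fun X => (top, X)) ⁻¹'
      {p : (Fin (m+1) → ℝ) × ((k : Fin m) → Fin ((k:ℕ)+1) → ℝ) | p.2 ∈ GTpolytope m p.1} := rfl
  rw [h]
  exact (measurableSet_GTpair m).preimage (measurable_const.prodMk measurable_id)

/-! ### The tail of a Gelfand–Tsetlin array -/

def GTtail (m : ℕ) (X : (k : Fin (m+1)) → Fin ((k:ℕ)+1) → ℝ) :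
    (j : Fin m) → Fin ((j:ℕ)+1) → ℝ :=
  fun j i => X ((Fin.last m).succAbove j) (Fin.cast (by simp [Fin.succAbove_last]) i)

lemma GT_row_tail {m : ℕ} (top : Fin (m+2) → ℝ) (X : (k : Fin (m+1)) → Fin ((k:ℕ)+1) → ℝ)
    (k : ℕ) (hk : k < m+1) (i : Fin (k+1)) :
    GTrow m (X (Fin.last m)) (GTtail m X) k hk i
      = GTrow (m+1) top X k (Nat.lt_succ_of_lt hk) i := by
  unfold GTrow GTtail
  by_cases h : k < m
  · rw [dif_pos h, dif_pos (by omega : k < m+1)]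
    exact GT_apply_congr X (by simp [Fin.succAbove_last]) (by simp)
  · rw [dif_neg h, dif_pos (by omega : k < m+1)]
    have hk' : k = m := by omega
    subst hk'
    exact GT_apply_congr X (by simp) (by simp)

lemma GT_mem_split (m : ℕ) (top : Fin (m+2) → ℝ) (X : (k : Fin (m+1)) → Fin ((k:ℕ)+1) → ℝ) :
    X ∈ GTpolytope (m+1) top ↔
      ((∀ i : Fin (m+1), top i.castSucc ≤ X (Fin.last m) i ∧ X (Fin.last m) i ≤ top i.succ) ∧
        GTtail m X ∈ GTpolytope m (X (Fin.last m))) := by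
  have hTop : ∀ (pf : m+1 < m+1+1) (j : Fin (m+2)), GTrow (m+1) top X (m+1) pf j = top j := by
    intro pf j
    unfold GTrow
    rw [dif_neg (by omega)]
    exact congrArg top (Fin.ext (by simp))
  have hM : ∀ (pf : m < m+1+1) (i : Fin (m+1)), GTrow (m+1) top X m pf i = X (Fin.last m) i := by
    intro pf i
    unfold GTrow
    rw [dif_pos (by omega : m < m+1)]
    exact GT_apply_congr X (by simp) rfl
  constructor
  · intro hX
    constructor
    · intro i
      have h2 := hX m (by omega) i
      simpa only [hTop, hM] using h2
    · intro k hk i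
      simp only [GT_row_tail top X]
      exact hX k (by omega) i
  · rintro ⟨hb, hin⟩ k hk i
    by_cases hkm : k < m
    · have := hin k hkm i
      simpa only [GT_row_tail top X] using this
    · have hk' : k = m := by omega
      subst hk'
      have hi := hb i
      constructor
      · rw [hTop, hM]
        exact hi.1
      · rw [hTop, hM]
        exact hi.2

/-! ### The main induction -/

lemma volume_GT_aux : ∀ (m : ℕ) (top : Fin (m+1) → ℝ), StrictMono top →
    volume (GTpolytope m top)
      = ENNReal.ofReal (vandR (m+1) top / ∏ k ∈ Finset.range (m+1), (k.factorial : ℝ)) := by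
  intro m
  induction m with
  | zero =>
    intro top _
    have huniv : GTpolytope 0 top = Set.univ := by
      ext X
      simp only [GTpolytope, Set.mem_setOf_eq, Set.mem_univ, iff_true]
      intro k hk
      exact absurd hk (Nat.not_lt_zero k)
    rw [huniv]
    have h1 : (volume : Measure ((k : Fin 0) → Fin ((k:ℕ)+1) → ℝ)) Set.univ = 1 := by
      rw [volume_pi, Measure.pi_univ]
      simp
    rw [h1]
    have h2 : vandR 1 top = 1 := by
      simp [vandR]
    rw [h2]
    norm_num
  | succ m ih =>
    intro top htop
    classical
    set box := Set.pi Set.univ (fun i : Fin (m+1) => Set.Icc (top i.castSucc) (top i.succ))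
      with hboxdef
    set obox := Set.pi Set.univ (fun i : Fin (m+1) => Set.Ioo (top i.castSucc) (top i.succ))
      with hoboxdef
    have hboxm : MeasurableSet box := MeasurableSet.univ_pi fun j => measurableSet_Icc
    have hoboxm : MeasurableSet obox := MeasurableSet.univ_pi fun j => measurableSet_Ioo
    -- the measurable equivalence splitting off the top inner row
    have hsa : ∀ j : Fin m, (((Fin.last m).succAbove j : Fin (m+1)) : ℕ) = (j : ℕ) := by
      intro j; rw [Fin.succAbove_last]; simp
    let ce : (j : Fin m) → ((Fin ((((Fin.last m).succAbove j : Fin (m+1)) : ℕ)+1) → ℝ)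
        ≃ᵐ (Fin ((j:ℕ)+1) → ℝ)) :=
      fun j => MeasurableEquiv.arrowCongr' (finCongr (by rw [hsa j])) (MeasurableEquiv.refl ℝ)
    have hce : ∀ j, MeasurePreserving (ce j) volume volume := fun j =>
      volume_preserving_arrowCongr' _ (MeasurableEquiv.refl ℝ) ⟨measurable_id, Measure.map_id⟩
    let E2 := MeasurableEquiv.piCongrRight ce
    have hE2 : MeasurePreserving E2 volume volume :=
      measurePreserving_piCongrRight' _ _ ce hce
    let E1 := MeasurableEquiv.piFinSuccAbove (fun k : Fin (m+1) => Fin ((k:ℕ)+1) → ℝ) (Fin.last m)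
    have hE1 : MeasurePreserving E1 volume volume :=
      volume_preserving_piFinSuccAbove _ (Fin.last m)
    let E := E1.trans (MeasurableEquiv.prodCongr (MeasurableEquiv.refl (Fin (m+1) → ℝ)) E2)
    have hE : MeasurePreserving E volume volume :=
      (((MeasurePreserving.id volume).prod hE2).comp hE1)
    have happ : ∀ X : (k : Fin (m+1)) → Fin ((k:ℕ)+1) → ℝ,
        E X = (X (Fin.last m), GTtail m X) := by
      intro X
      refine Prod.ext ?_ ?_
      · simp [E, E1, MeasurableEquiv.piFinSuccAbove, MeasurableEquiv.prodCongr,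
          Equiv.prodCongr, Fin.insertNthEquiv, Fin.removeNth]
      · funext j i
        simp [E, E1, E2, ce, GTtail, MeasurableEquiv.piFinSuccAbove,
          MeasurableEquiv.arrowCongr', Equiv.arrowCongr', Equiv.arrowCongr,
          MeasurableEquiv.piCongrRight, Equiv.piCongrRight,
          MeasurableEquiv.prodCongr, Equiv.prodCongr, Fin.insertNthEquiv, Fin.removeNth]
    set S' : Set ((Fin (m+1) → ℝ) × ((k : Fin m) → Fin ((k:ℕ)+1) → ℝ)) :=
      {p | p.1 ∈ box ∧ p.2 ∈ GTpolytope m p.1} with hS'def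
    have hS' : MeasurableSet S' :=
      (hboxm.preimage measurable_fst).inter (measurableSet_GTpair m)
    have hset : GTpolytope (m+1) top = E ⁻¹' S' := by
      ext X
      rw [Set.mem_preimage, happ X, GT_mem_split m top X]
      constructor
      · rintro ⟨h1, h2⟩
        exact ⟨Set.mem_univ_pi.2 fun i => ⟨(h1 i).1, (h1 i).2⟩, h2⟩
      · rintro ⟨h1, h2⟩
        have h1' := Set.mem_univ_pi.1 h1
        exact ⟨fun i => ⟨(h1' i).1, (h1' i).2⟩, h2⟩
    -- interchange: slice the product measure
    have hslice : volume (GTpolytope (m+1) top)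
        = ∫⁻ y in box, volume (GTpolytope m y) := by
      rw [hset, hE.measure_preimage hS'.nullMeasurableSet, Measure.volume_eq_prod,
        Measure.prod_apply hS']
      have hsl : (fun y : Fin (m+1) → ℝ => volume (Prod.mk y ⁻¹' S'))
          = box.indicator (fun y => volume (GTpolytope m y)) := by
        funext y
        by_cases hy : y ∈ box
        · rw [Set.indicator_of_mem hy]
          congr 1
          ext g
          simp [hS'def, hy]
        · rw [Set.indicator_of_notMem hy]
          have hempty : Prod.mk y ⁻¹' S' = ∅ := by
            ext g
            simp [hS'def, hy]
          rw [hempty]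
          exact measure_empty
      rw [hsl]
      exact lintegral_indicator hboxm _
    -- boundary of the box is null
    have hosub : obox ⊆ box :=
      Set.pi_mono fun i _ => Set.Ioo_subset_Icc_self
    have hvol_eq : volume box = volume obox := by
      rw [hboxdef, hoboxdef, volume_pi_pi, volume_pi_pi]
      exact Finset.prod_congr rfl fun i _ => by rw [Real.volume_Icc, Real.volume_Ioo]
    have hofin : volume obox ≠ ⊤ := by
      rw [hoboxdef, volume_pi_pi]
      exact (ENNReal.prod_lt_top fun i _ => by rw [Real.volume_Ioo]; exact ENNReal.ofReal_lt_top).ne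
    have hnull : box =ᵐ[volume] obox := by
      rw [MeasureTheory.ae_eq_set]
      constructor
      · rw [measure_diff hosub hoboxm.nullMeasurableSet hofin, hvol_eq, tsub_self]
      · rw [Set.diff_eq_empty.2 hosub]
        exact measure_empty
    -- strict monotonicity inside the open box
    have hsm : ∀ y : Fin (m+1) → ℝ, y ∈ obox → StrictMono y := by
      intro y hy
      have hy' := Set.mem_univ_pi.1 hy
      refine Fin.strictMono_iff_lt_succ.2 fun i => ?_
      calc y i.castSucc < top i.castSucc.succ := (hy' i.castSucc).2
        _ = top i.succ.castSucc := by rw [Fin.succ_castSucc]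
        _ < y i.succ := (hy' i.succ).1
    set c : ℝ := ∏ k ∈ Finset.range (m+1), (k.factorial : ℝ) with hc
    have hcpos : 0 < c := Finset.prod_pos fun k _ => by positivity
    -- rewrite with the induction hypothesis on the open box
    have hIH : ∫⁻ y in box, volume (GTpolytope m y)
        = ∫⁻ y in obox, ENNReal.ofReal (vandR (m+1) y / c) := by
      rw [setLIntegral_congr hnull]
      refine setLIntegral_congr_fun hoboxm (fun y hy => ?_)
      rw [ih y (hsm y hy)]
    -- positivity of the integrand
    have hpos : ∀ y : Fin (m+1) → ℝ, y ∈ obox → 0 ≤ vandR (m+1) y / c := by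
      intro y hy
      have hsm' := hsm y hy
      have : 0 < vandR (m+1) y := by
        refine Finset.prod_pos fun i _ => Finset.prod_pos fun j hj => ?_
        have hij : i < j := Finset.mem_Ioi.1 hj
        exact sub_pos.2 (hsm' hij)
      positivity
    -- vandR is continuous, hence integrable on the box
    have hcont : Continuous (fun y : Fin (m+1) → ℝ => vandR (m+1) y / c) := by
      apply Continuous.div_const
      exact continuous_finset_prod _ fun i _ => continuous_finset_prod _ fun j _ =>
        (continuous_apply j).sub (continuous_apply i)
    have hintg : IntegrableOn (fun y : Fin (m+1) → ℝ => vandR (m+1) y / c) obox := by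
      refine IntegrableOn.mono_set ?_ hosub
      exact hcont.continuousOn.integrableOn_compact (isCompact_univ_pi fun j => isCompact_Icc)
    have hlift : ∫⁻ y in obox, ENNReal.ofReal (vandR (m+1) y / c)
        = ENNReal.ofReal (∫ y in obox, vandR (m+1) y / c) := by
      rw [← MeasureTheory.ofReal_integral_eq_lintegral_ofReal hintg]
      exact ((ae_restrict_iff' hoboxm).2 (Filter.Eventually.of_forall hpos))
    have hval : ∫ y in obox, vandR (m+1) y / c
        = (vandR (m+2) top / ((m+1).factorial : ℝ)) / c := by
      rw [integral_div, MeasureTheory.setIntegral_congr_set hnull.symm,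
        integral_vandR_box (m+1) top htop.monotone]
    rw [hslice, hIH, hlift, hval]
    congr 1
    rw [Finset.prod_range_succ, ← hc, div_div]
    ring

/-- the Lebesgue volume of the Gelfand–Tsetlin polytope with top row
`x^n` is `h_n(x^n)/Π_{k<n} k!` (here `n = m+1`). -/
theorem volume_GTpolytope (m : ℕ) (top : Fin (m+1) → ℝ) (htop : StrictMono top) :
    volume (GTpolytope m top)
      = ENNReal.ofReal (vandR (m+1) top / ∏ k ∈ Finset.range (m+1), (k.factorial : ℝ)) :=
  volume_GT_aux m top htop
end

section
/- Fix n ≥ 1 and t ∈ ℕ. Define the (2n+1)×(2n+1) block matrix M((x,y),(x',y')) with blocks A, B, C, D as follows: A is (n+1)×(n+1) with entries φ^{(t)}(x'_i − x_j); B is (n+1)×n with entries Δ^{−1}φ^{(t)}(y'_i − x_j) − 1{j ≥ i}; C is n×(n+1) with entries Δφ^{(t)}(y'_i − x_j); D is n×n with entries φ^{(t)}(y'_i − y_j), where φ = (1/2)(δ_0 + δ_1), Δ^{−1}f(x) = Σ_{z ≤ x} f(z), Δf(x) = f(x) − f(x−1). Let q_t((x,y),(x',y')) = det M. Then for t = 0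 and any f : W^{n+1,n} → ℝ, Σ_{(x',y') ∈ W^{n+1,n}} q_0((x,y),(x',y')) f(x',y') = f(x,y); i.e., q_0((x,y),·) = δ_{(x,y)} on W^{n+1,n}. -/
open Matrix BigOperators

lemma Dinv_delta (v : ℤ) : Dinv (deltaK 0) v = if 0 ≤ v then 1 else 0 := by
  unfold Dinv
  by_cases h : (0:ℤ) ≤ v
  · rw [if_pos h, tsum_eq_single (⟨0, h⟩ : {z : ℤ // z ≤ v})]
    · simp [deltaK]
    · intro b hb
      have hb0 : b.1 ≠ 0 := fun hb0 => hb (Subtype.ext hb0)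
      simp [deltaK, hb0]
  · rw [if_neg h]
    have h0 : ∀ b : {z : ℤ // z ≤ v}, deltaK 0 b.1 = 0 := by
      intro b
      have hb := b.2
      have : b.1 ≠ 0 := by omega
      simp [deltaK, this]
    calc ∑' z : {z : ℤ // z ≤ v}, deltaK 0 z.1 = ∑' _ : {z : ℤ // z ≤ v}, (0:ℝ) :=
        tsum_congr h0
      _ = 0 := tsum_zero

/-- The explicit 0/±1 matrix equal to the `t = 0` kernel matrix. -/
noncomputable def Nmat (n : ℕ) (x : Fin (n+1) → ℤ) (y : Fin n → ℤ)
    (x' : Fin (n+1) → ℤ) (y' : Fin n → ℤ) :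
    Matrix (Fin (n+1) ⊕ Fin n) (Fin (n+1) ⊕ Fin n) ℝ :=
  Matrix.fromBlocks
    (Matrix.of fun i j : Fin (n+1) => if x' j = x i then (1:ℝ) else 0)
    (Matrix.of fun (i : Fin (n+1)) (j : Fin n) =>
      (if x i ≤ y' j then (1:ℝ) else 0) - if (i:ℕ) ≤ (j:ℕ) then 1 else 0)
    (Matrix.of fun (i : Fin n) (j : Fin (n+1)) =>
      (if x' j = y i then (1:ℝ) else 0) - if x' j = y i + 1 then 1 else 0)
    (Matrix.of fun i j : Fin n => if y' j = y i then (1:ℝ) else 0)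

lemma Nmat_ll {n x y x' y'} (i j : Fin (n+1)) :
    Nmat n x y x' y' (Sum.inl i) (Sum.inl j) = if x' j = x i then (1:ℝ) else 0 := rfl
lemma Nmat_lr {n x y x' y'} (i : Fin (n+1)) (j : Fin n) :
    Nmat n x y x' y' (Sum.inl i) (Sum.inr j) =
      (if x i ≤ y' j then (1:ℝ) else 0) - if (i:ℕ) ≤ (j:ℕ) then 1 else 0 := rfl
lemma Nmat_rl {n x y x' y'} (i : Fin n) (j : Fin (n+1)) :
    Nmat n x y x' y' (Sum.inr i) (Sum.inl j) =
      (if x' j = y i then (1:ℝ) else 0) - if x' j = y i + 1 then 1 else 0 := rfl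
lemma Nmat_rr {n x y x' y'} (i j : Fin n) :
    Nmat n x y x' y' (Sum.inr i) (Sum.inr j) = if y' j = y i then (1:ℝ) else 0 := rfl

lemma qker_zero_eq_Nmat (n : ℕ) (x : Fin (n+1) → ℤ) (y : Fin n → ℤ)
    (x' : Fin (n+1) → ℤ) (y' : Fin n → ℤ) :
    qker n 0 x y x' y' = (Nmat n x y x' y').det := by
  unfold qker Nmat
  congr 1
  ext i j
  cases i with
  | inl i =>
    cases j with
    | inl j =>
      show phiPow 0 (x' j - x i) = _
      show deltaK 0 (x' j - x i) = _
      simp only [deltaK, Matrix.fromBlocks_apply₁₁, Matrix.of_apply, sub_eq_zero]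
    | inr j =>
      show Dinv (deltaK 0) (y' j - x i) - _ = _
      rw [Dinv_delta]
      simp only [Matrix.fromBlocks_apply₁₂, Matrix.of_apply, sub_nonneg]
  | inr i =>
    cases j with
    | inl j =>
      show Dd (deltaK 0) (x' j - y i) = _
      simp only [Dd, deltaK, Matrix.fromBlocks_apply₂₁, Matrix.of_apply]
      split_ifs
      all_goals try norm_num
      all_goals omega
    | inr j =>
      show deltaK 0 (y' j - y i) = _
      simp only [deltaK, Matrix.fromBlocks_apply₂₂, Matrix.of_apply, sub_eq_zero]

/-- Basic order facts extracted from interlacing. -/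
lemma interFacts {n : ℕ} {x : Fin (n+1) → ℤ} {y : Fin n → ℤ} (h : interlace n x y) :
    (∀ i j : Fin (n+1), (i:ℕ) ≤ (j:ℕ) → x i ≤ x j) ∧
    (∀ i j : Fin (n+1), (i:ℕ) < (j:ℕ) → x i < x j) ∧
    (∀ (i : Fin (n+1)) (j : Fin n), (i:ℕ) ≤ (j:ℕ) → x i ≤ y j) ∧
    (∀ (i : Fin (n+1)) (j : Fin n), (j:ℕ) < (i:ℕ) → y j < x i) ∧
    (∀ i j : Fin n, (i:ℕ) < (j:ℕ) → y i < y j) := by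
  have hsm : StrictMono x :=
    Fin.strictMono_iff_lt_succ.2 fun i => lt_of_le_of_lt (h i).1 (h i).2
  have hlt : ∀ i j : Fin (n+1), (i:ℕ) < (j:ℕ) → x i < x j := fun i j hij =>
    hsm (Fin.lt_def.2 hij)
  have hle : ∀ i j : Fin (n+1), (i:ℕ) ≤ (j:ℕ) → x i ≤ x j := fun i j hij =>
    hsm.monotone (Fin.le_def.2 hij)
  have hxy : ∀ (i : Fin (n+1)) (j : Fin n), (i:ℕ) ≤ (j:ℕ) → x i ≤ y j := by
    intro i j hij
    exact le_trans (hle i j.castSucc (by simpa using hij)) (h j).1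
  have hyx : ∀ (i : Fin (n+1)) (j : Fin n), (j:ℕ) < (i:ℕ) → y j < x i := by
    intro i j hij
    exact lt_of_lt_of_le (h j).2 (hle j.succ i (by simpa using hij))
  have hyy : ∀ i j : Fin n, (i:ℕ) < (j:ℕ) → y i < y j := by
    intro i j hij
    exact lt_of_lt_of_le (h i).2 (hxy i.succ j (by simpa using hij))
  exact ⟨hle, hlt, hxy, hyx, hyy⟩

lemma det_eq_zero_of_col_neg {m : Type*} [DecidableEq m] [Fintype m]
    (M : Matrix m m ℝ) {i j : m} (hij : i ≠ j) (h : ∀ r, M r i = - M r j) :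
    M.det = 0 := by
  rw [← Matrix.det_transpose, ← Matrix.det_updateRow_add_smul_self Mᵀ hij (1:ℝ)]
  apply Matrix.det_eq_zero_of_row_eq_zero i
  intro c
  simp [Matrix.updateRow_self, Matrix.transpose_apply, h c]
open scoped Classical in
lemma Nmat_det {n : ℕ} {x x' : Fin (n+1) → ℤ} {y y' : Fin n → ℤ}
    (h : interlace n x y) (h' : interlace n x' y') :
    (Nmat n x y x' y').det = if x' = x ∧ y' = y then 1 else 0 := by
  obtain ⟨hle, hlt, hxy, hyx, hyy⟩ := interFacts h
  obtain ⟨hle', hlt', hxy', hyx', hyy'⟩ := interFacts h'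
  by_cases hd : x' = x ∧ y' = y
  · rw [if_pos hd, hd.1, hd.2]
    unfold Nmat
    have hB0 : (Matrix.of fun (i : Fin (n+1)) (j : Fin n) =>
        (if x i ≤ y j then (1:ℝ) else 0) - if (i:ℕ) ≤ (j:ℕ) then 1 else 0) = 0 := by
      ext i j
      simp only [Matrix.of_apply, Matrix.zero_apply]
      rcases le_or_gt (i:ℕ) (j:ℕ) with hij | hij
      · rw [if_pos (hxy i j hij), if_pos hij, sub_self]
      · rw [if_neg (not_le.2 (hyx i j hij)), if_neg (by omega), sub_self]
    rw [hB0, Matrix.det_fromBlocks_zero₁₂]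
    have hA : (Matrix.of fun i j : Fin (n+1) => if x j = x i then (1:ℝ) else 0) =
        (1 : Matrix (Fin (n+1)) (Fin (n+1)) ℝ) := by
      ext i j
      simp only [Matrix.of_apply, Matrix.one_apply]
      by_cases hij : i = j
      · subst hij; simp
      · have h1 : (i:ℕ) ≠ (j:ℕ) := fun hc => hij (Fin.ext hc)
        have : x j ≠ x i := by
          rcases lt_or_gt_of_ne h1 with hc | hc
          · exact fun he => absurd he.symm (ne_of_lt (hlt i j hc))
          · exact ne_of_lt (hlt j i hc)
        rw [if_neg this, if_neg hij]
    have hD : (Matrix.of fun i j : Fin n => if y j = y i then (1:ℝ) else 0) =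
        (1 : Matrix (Fin n) (Fin n) ℝ) := by
      ext i j
      simp only [Matrix.of_apply, Matrix.one_apply]
      by_cases hij : i = j
      · subst hij; simp
      · have h1 : (i:ℕ) ≠ (j:ℕ) := fun hc => hij (Fin.ext hc)
        have : y j ≠ y i := by
          rcases lt_or_gt_of_ne h1 with hc | hc
          · exact fun he => absurd he.symm (ne_of_lt (hyy i j hc))
          · exact ne_of_lt (hyy j i hc)
        rw [if_neg this, if_neg hij]
    rw [hA, hD, Matrix.det_one, Matrix.det_one, mul_one]
  · rw [if_neg hd]
    -- find the first discrepancy in the interleaved order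
    have hPex : ∃ m : ℕ, (∃ k : Fin (n+1), m = 2*(k:ℕ) ∧ x' k ≠ x k) ∨
        (∃ k : Fin n, m = 2*(k:ℕ)+1 ∧ y' k ≠ y k) := by
      by_cases hx : x' = x
      · have hy : y' ≠ y := fun hy => hd ⟨hx, hy⟩
        obtain ⟨k, hk⟩ := Function.ne_iff.1 hy
        exact ⟨2*(k:ℕ)+1, Or.inr ⟨k, rfl, hk⟩⟩
      · obtain ⟨k, hk⟩ := Function.ne_iff.1 hx
        exact ⟨2*(k:ℕ), Or.inl ⟨k, rfl, hk⟩⟩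
    have hm := Nat.find_spec hPex
    have hxag : ∀ i : Fin (n+1), 2*(i:ℕ) < Nat.find hPex → x' i = x i := by
      intro i hi
      by_contra hne
      exact Nat.find_min hPex hi (Or.inl ⟨i, rfl, hne⟩)
    have hyag : ∀ i : Fin n, 2*(i:ℕ)+1 < Nat.find hPex → y' i = y i := by
      intro i hi
      by_contra hne
      exact Nat.find_min hPex hi (Or.inr ⟨i, rfl, hne⟩)
    rcases hm with ⟨k, hk, hne⟩ | ⟨k, hk, hne⟩
    · -- discrepancy in x at k
      have hxa : ∀ i : Fin (n+1), (i:ℕ) < (k:ℕ) → x' i = x i := fun i hi =>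
        hxag i (by omega)
      have hya : ∀ i : Fin n, (i:ℕ) < (k:ℕ) → y' i = y i := fun i hi =>
        hyag i (by omega)
      rcases lt_or_gt_of_ne hne with hL | hG
      · -- x' k < x k
        have htop : ∀ i : Fin (n+1), Nmat n x y x' y' (Sum.inl i) (Sum.inl k) = 0 := by
          intro i
          rw [Nmat_ll]
          rcases lt_or_ge (i:ℕ) (k:ℕ) with hik | hik
          · have h1 := hxa i hik
            have h2 := hlt' i k hik
            rw [if_neg (by omega)]
          · have h1 := hle k i hik
            rw [if_neg (by omega)]
        by_cases hex : ∃ i : Fin n, (i:ℕ) < (k:ℕ) ∧ y i = x' k - 1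
        · obtain ⟨i0, hi0k, hi0⟩ := hex
          apply det_eq_zero_of_col_neg _ (show (Sum.inl k : Fin (n+1) ⊕ Fin n) ≠ Sum.inr i0 by simp)
          intro r
          cases r with
          | inl i =>
            rw [htop i, Nmat_lr]
            have h1 : y' i0 = y i0 := hya i0 hi0k
            rcases le_or_gt (i:ℕ) (i0:ℕ) with hii | hii
            · have h2 := hxy i i0 hii
              rw [if_pos (by omega), if_pos hii]
              norm_num
            · have h2 := hyx i i0 hii
              rw [if_neg (by omega), if_neg (by omega)]
              norm_num
          | inr i =>
            rw [Nmat_rl, Nmat_rr]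
            have h1 : y' i0 = y i0 := hya i0 hi0k
            by_cases hii : i = i0
            · subst hii
              rw [if_neg (by omega), if_pos (by omega), if_pos (by omega)]
              norm_num
            · have hyne : y i ≠ y i0 := by
                have h2 : (i:ℕ) ≠ (i0:ℕ) := fun hc => hii (Fin.ext hc)
                rcases lt_or_gt_of_ne h2 with hc | hc
                · exact ne_of_lt (hyy i i0 hc)
                · exact fun he => absurd he.symm (ne_of_lt (hyy i0 i hc))
              rcases lt_or_ge (i:ℕ) (k:ℕ) with hik | hik
              · have h2 : y' i = y i := hya i hik
                have h3 := hyx' k i hik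
                rw [if_neg (by omega), if_neg (by omega), if_neg (by omega)]
                norm_num
              · have h2 := hxy k i hik
                rw [if_neg (by omega), if_neg (by omega), if_neg (by omega)]
                norm_num
        · apply Matrix.det_eq_zero_of_column_eq_zero (Sum.inl k)
          intro r
          cases r with
          | inl i => exact htop i
          | inr i =>
            rw [Nmat_rl]
            rcases lt_or_ge (i:ℕ) (k:ℕ) with hik | hik
            · have h2 : y' i = y i := hya i hik
              have h3 := hyx' k i hik
              have h4 : y i ≠ x' k - 1 := fun hc => hex ⟨i, hik, hc⟩
              rw [if_neg (by omega), if_neg (by omega)]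
              norm_num
            · have h2 := hxy k i hik
              rw [if_neg (by omega), if_neg (by omega)]
              norm_num
      · -- x k < x' k : row (inl k) is zero
        apply Matrix.det_eq_zero_of_row_eq_zero (Sum.inl k)
        intro c
        cases c with
        | inl j =>
          rw [Nmat_ll]
          rcases lt_or_ge (j:ℕ) (k:ℕ) with hjk | hjk
          · have h1 := hxa j hjk
            have h2 := hlt j k hjk
            rw [if_neg (by omega)]
          · have h1 := hle' k j hjk
            rw [if_neg (by omega)]
        | inr j =>
          rw [Nmat_lr]
          rcases lt_or_ge (j:ℕ) (k:ℕ) with hjk | hjk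
          · have h1 : y' j = y j := hya j hjk
            have h2 := hyx k j hjk
            rw [if_neg (by omega), if_neg (by omega)]
            norm_num
          · have h1 := hxy' k j hjk
            rw [if_pos (by omega), if_pos hjk]
            norm_num
    · -- discrepancy in y at k
      have hxa : ∀ i : Fin (n+1), (i:ℕ) ≤ (k:ℕ) → x' i = x i := fun i hi =>
        hxag i (by omega)
      have hya : ∀ i : Fin n, (i:ℕ) < (k:ℕ) → y' i = y i := fun i hi =>
        hyag i (by omega)
      rcases lt_or_gt_of_ne hne with hL | hG
      · -- y' k < y k : column (inr k) is zero
        apply Matrix.det_eq_zero_of_column_eq_zero (Sum.inr k)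
        intro r
        cases r with
        | inl i =>
          rw [Nmat_lr]
          rcases le_or_gt (i:ℕ) (k:ℕ) with hik | hik
          · have h1 : x' i = x i := hxa i hik
            have h2 := hxy' i k hik
            rw [if_pos (by omega), if_pos hik]
            norm_num
          · have h1 := hyx i k hik
            rw [if_neg (by omega), if_neg (by omega)]
            norm_num
        | inr i =>
          rw [Nmat_rr]
          rcases lt_or_ge (i:ℕ) (k:ℕ) with hik | hik
          · have h1 : y' i = y i := hya i hik
            have h2 := hyy' i k hik
            rw [if_neg (by omega)]
          · have h1 : (k:ℕ) ≤ (i:ℕ) := hik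
            have h2 : y k ≤ y i := by
              rcases eq_or_lt_of_le h1 with hc | hc
              · rw [Fin.ext hc]  -- k = i
              · exact le_of_lt (hyy k i hc)
            rw [if_neg (by omega)]
      · -- y k < y' k
        have hxK : x k.castSucc ≤ y k := (h k).1
        have hKval : ((k.castSucc : Fin (n+1)) : ℕ) = (k:ℕ) := by simp
        rcases eq_or_lt_of_le hxK with hEq | hXlt
        · -- x (castSucc k) = y k : rows (inl k.castSucc) and (inr k) are equal
          apply Matrix.det_zero_of_row_eq
            (show (Sum.inl k.castSucc : Fin (n+1) ⊕ Fin n) ≠ Sum.inr k by simp)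
          funext c
          cases c with
          | inl j =>
            rw [Nmat_ll, Nmat_rl]
            have hno : x' j ≠ y k + 1 := by
              rcases le_or_gt (j:ℕ) (k:ℕ) with hjk | hjk
              · have h1 : x' j = x j := hxa j hjk
                have h2 : x j ≤ x k.castSucc := hle j k.castSucc (by omega)
                omega
              · have h1 := hyx' j k hjk
                omega
            rw [if_neg hno]
            by_cases hx1 : x' j = y k
            · rw [if_pos hx1, if_pos (by omega)]
              norm_num
            · rw [if_neg hx1, if_neg (by omega)]
              norm_num
          | inr j =>
            rw [Nmat_lr, Nmat_rr]
            rcases lt_trichotomy (j:ℕ) (k:ℕ) with hjk | hjk | hjk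
            · have h1 : y' j = y j := hya j hjk
              have h2 := hyy j k hjk
              rw [if_neg (by omega), if_neg (by omega), if_neg (by omega)]
              norm_num
            · have hjk' : j = k := Fin.ext hjk
              subst hjk'
              rw [if_pos (by omega), if_pos (by omega), if_neg (by omega)]
              norm_num
            · have h1 := hyy' k j hjk
              rw [if_pos (by omega), if_pos (by omega), if_neg (by omega)]
              norm_num
        · -- x (castSucc k) < y k : row (inr k) is zero
          apply Matrix.det_eq_zero_of_row_eq_zero (Sum.inr k)
          intro c
          cases c with
          | inl j =>
            rw [Nmat_rl]
            rcases le_or_gt (j:ℕ) (k:ℕ) with hjk | hjk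
            · have h1 : x' j = x j := hxa j hjk
              have h2 : x j ≤ x k.castSucc := hle j k.castSucc (by omega)
              rw [if_neg (by omega), if_neg (by omega)]
              norm_num
            · have h1 := hyx' j k hjk
              rw [if_neg (by omega), if_neg (by omega)]
              norm_num
          | inr j =>
            rw [Nmat_rr]
            rcases lt_trichotomy (j:ℕ) (k:ℕ) with hjk | hjk | hjk
            · have h1 : y' j = y j := hya j hjk
              have h2 := hyy j k hjk
              rw [if_neg (by omega)]
            · have hjk' : j = k := Fin.ext hjk
              subst hjk'
              rw [if_neg (by omega)]
            · have h1 := hyy' k j hjk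
              rw [if_neg (by omega)]

/-- `q_0^n((x,y),·)` acts as the Dirac delta at `(x,y)` on `W^{n+1,n}`. -/
theorem qker_zero_is_delta (n : ℕ) (x : Fin (n+1) → ℤ) (y : Fin n → ℤ)
    (hxy : interlace n x y)
    (f : {p : (Fin (n+1) → ℤ) × (Fin n → ℤ) // interlace n p.1 p.2} → ℝ) :
    ∑' p : {p : (Fin (n+1) → ℤ) × (Fin n → ℤ) // interlace n p.1 p.2},
        qker n 0 x y p.1.1 p.1.2 * f p = f ⟨(x, y), hxy⟩ := by
  classical
  have key : ∀ (x' : Fin (n+1) → ℤ) (y' : Fin n → ℤ), interlace n x' y' →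
      qker n 0 x y x' y' = if x' = x ∧ y' = y then 1 else 0 := by
    intro x' y' h'
    rw [qker_zero_eq_Nmat, Nmat_det hxy h']
  have h0 : ∀ (p : {p : (Fin (n+1) → ℤ) × (Fin n → ℤ) // interlace n p.1 p.2}),
      p ≠ ⟨(x, y), hxy⟩ → qker n 0 x y p.1.1 p.1.2 * f p = 0 := by
    intro p hp
    rw [key p.1.1 p.1.2 p.2]
    rw [if_neg, zero_mul]
    rintro ⟨h1, h2⟩
    exact hp (Subtype.ext (Prod.ext h1 h2))
  rw [tsum_eq_single _ h0, key x y hxy, if_pos ⟨rfl, rfl⟩, one_mul]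
end

section
/- With q_t^n the determinantal kernel as above, if x_i = y_i for some i, then the forward difference in x_i vanishes: ∇̄_{x_i} q_t^n((x,y),(x',y')) = 0, where ∇̄_{x_i} f(x,y) = f(x with x_i replaced by x_i+1, y) − f(x,y). Similarly, if x_{i+1} = y_i then ∇̄_{x_{i+1}} q_t^n((x,y),(x',y')) = 0. -/
open Matrix BigOperators

lemma conv_phiB (f : ℤ → ℝ) (x : ℤ) : conv f phiB x = (f x + f (x - 1)) / 2 := by
  have h : ∀ s : ℤ, s ∉ ({x - 1, x} : Finset ℤ) → f s * phiB (x - s) = 0 := by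
    intro s hs
    simp only [Finset.mem_insert, Finset.mem_singleton] at hs
    push_neg at hs
    have : phiB (x - s) = 0 := by
      simp only [phiB, deltaK]
      rw [if_neg (by omega), if_neg (by omega)]; norm_num
    rw [this, mul_zero]
  rw [conv, tsum_eq_sum h, Finset.sum_insert (by simp), Finset.sum_singleton]
  have h1 : x - (x - 1) = 1 := by ring
  rw [h1, sub_self]
  simp only [phiB, deltaK, if_pos rfl]
  norm_num
  ring

lemma phiPow_eq_zero (t : ℕ) (x : ℤ) (h : x < 0 ∨ (t : ℤ) < x) : phiPow t x = 0 := by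
  induction t generalizing x with
  | zero =>
    simp only [phiPow, deltaK]
    rw [if_neg (by omega)]
  | succ n ih =>
    rw [phiPow, conv_phiB, ih x (by omega), ih (x - 1) (by omega)]
    norm_num

lemma phiPow_summable (t : ℕ) : Summable (phiPow t) := by
  refine summable_of_ne_finset_zero (s := Finset.Icc (0 : ℤ) t) ?_
  intro b hb
  simp only [Finset.mem_Icc] at hb
  exact phiPow_eq_zero t b (by omega)

lemma Dinv_step (f : ℤ → ℝ) (hf : Summable f) (x : ℤ) :
    Dinv f x = Dinv f (x - 1) + f x := by
  have e1 : Dinv f x = ∑' z : ℤ, Set.indicator {z : ℤ | z ≤ x} f z := by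
    rw [Dinv]; exact tsum_subtype {z : ℤ | z ≤ x} f
  have e2 : Dinv f (x - 1) = ∑' z : ℤ, Set.indicator {z : ℤ | z ≤ x - 1} f z := by
    rw [Dinv]; exact tsum_subtype {z : ℤ | z ≤ x - 1} f
  have key : ∀ z : ℤ, Set.indicator {z : ℤ | z ≤ x} f z
      = Set.indicator {z : ℤ | z ≤ x - 1} f z + (if z = x then f x else 0) := by
    intro z
    simp only [Set.indicator, Set.mem_setOf_eq]
    by_cases h1 : z = x
    · subst h1
      rw [if_pos le_rfl, if_neg (by omega), if_pos rfl]; ring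
    · rw [if_neg h1]
      by_cases h2 : z ≤ x - 1
      · rw [if_pos (by omega), if_pos h2]; ring
      · rw [if_neg (by omega), if_neg h2]; ring
  have hs2 : Summable (fun z : ℤ => if z = x then f x else 0) :=
    summable_of_ne_finset_zero (s := {x}) (by
      intro b hb; simp only [Finset.mem_singleton] at hb; rw [if_neg hb])
  rw [e1, e2]
  calc ∑' z : ℤ, Set.indicator {z : ℤ | z ≤ x} f z
      = ∑' z : ℤ, (Set.indicator {z : ℤ | z ≤ x - 1} f z + (if z = x then f x else 0)) :=
        tsum_congr key
    _ = (∑' z : ℤ, Set.indicator {z : ℤ | z ≤ x - 1} f z)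
          + ∑' z : ℤ, (if z = x then f x else 0) := Summable.tsum_add (hf.indicator _) hs2
    _ = (∑' z : ℤ, Set.indicator {z : ℤ | z ≤ x - 1} f z) + f x := by rw [tsum_ite_eq]

/-- The matrix underlying `qker`. -/
noncomputable def qmat (n t : ℕ) (x : Fin (n+1) → ℤ) (y : Fin n → ℤ)
    (x' : Fin (n+1) → ℤ) (y' : Fin n → ℤ) :
    Matrix (Fin (n+1) ⊕ Fin n) (Fin (n+1) ⊕ Fin n) ℝ :=
  Matrix.fromBlocks
    (Matrix.of fun i j : Fin (n+1) => phiPow t (x' j - x i))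
    (Matrix.of fun (i : Fin (n+1)) (j : Fin n) =>
      Dinv (phiPow t) (y' j - x i) - if (i : ℕ) ≤ (j : ℕ) then 1 else 0)
    (Matrix.of fun (i : Fin n) (j : Fin (n+1)) => Dd (phiPow t) (x' j - y i))
    (Matrix.of fun i j : Fin n => phiPow t (y' j - y i))

lemma qker_eq_det (n t : ℕ) (x : Fin (n+1) → ℤ) (y : Fin n → ℤ)
    (x' : Fin (n+1) → ℤ) (y' : Fin n → ℤ) :
    qker n t x y x' y' = (qmat n t x y x' y').det := rfl

lemma qmat_apply₁₁ (n t : ℕ) (x : Fin (n+1) → ℤ) (y : Fin n → ℤ)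
    (x' : Fin (n+1) → ℤ) (y' : Fin n → ℤ) (a b : Fin (n+1)) :
    qmat n t x y x' y' (Sum.inl a) (Sum.inl b) = phiPow t (x' b - x a) := rfl

lemma qmat_apply₁₂ (n t : ℕ) (x : Fin (n+1) → ℤ) (y : Fin n → ℤ)
    (x' : Fin (n+1) → ℤ) (y' : Fin n → ℤ) (a : Fin (n+1)) (b : Fin n) :
    qmat n t x y x' y' (Sum.inl a) (Sum.inr b)
      = Dinv (phiPow t) (y' b - x a) - if (a : ℕ) ≤ (b : ℕ) then 1 else 0 := rfl

lemma qmat_apply₂₁ (n t : ℕ) (x : Fin (n+1) → ℤ) (y : Fin n → ℤ)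
    (x' : Fin (n+1) → ℤ) (y' : Fin n → ℤ) (a : Fin n) (b : Fin (n+1)) :
    qmat n t x y x' y' (Sum.inr a) (Sum.inl b) = Dd (phiPow t) (x' b - y a) := rfl

lemma qmat_apply₂₂ (n t : ℕ) (x : Fin (n+1) → ℤ) (y : Fin n → ℤ)
    (x' : Fin (n+1) → ℤ) (y' : Fin n → ℤ) (a b : Fin n) :
    qmat n t x y x' y' (Sum.inr a) (Sum.inr b) = phiPow t (y' b - y a) := rfl

lemma qker_diff_aux (n t : ℕ) (x x' : Fin (n+1) → ℤ) (y y' : Fin n → ℤ)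
    (k : Fin (n+1)) (i : Fin n) (h : x k = y i) :
    qker n t (Function.update x k (x k + 1)) y x' y' - qker n t x y x' y' = 0 := by
  classical
  set N := qmat n t x y x' y' with hN
  have hMN : qmat n t (Function.update x k (x k + 1)) y x' y'
      = N.updateRow (Sum.inl k) (N (Sum.inl k) + (-1 : ℝ) • N (Sum.inr i)) := by
    ext r c
    rcases r with a | a
    · rcases eq_or_ne a k with rfl | hak
      · rw [Matrix.updateRow_self]
        rcases c with b | b
        · simp only [qmat_apply₁₁, Pi.add_apply, Pi.smul_apply, smul_eq_mul, hN,
            qmat_apply₂₁, Function.update_self, Dd]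
          have e : x' b - (x a + 1) = x' b - x a - 1 := by ring
          rw [e, ← h]
          ring
        · simp only [qmat_apply₁₂, Pi.add_apply, Pi.smul_apply, smul_eq_mul, hN,
            qmat_apply₂₂, Function.update_self]
          rw [← h, Dinv_step (phiPow t) (phiPow_summable t) (y' b - x a)]
          have e : y' b - (x a + 1) = y' b - x a - 1 := by ring
          rw [e]; ring
      · rw [Matrix.updateRow_ne (by simp [hak])]
        rcases c with b | b <;>
          simp only [hN, qmat_apply₁₁, qmat_apply₁₂, Function.update_of_ne hak]
    · rw [Matrix.updateRow_ne (by simp)]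
      rcases c with b | b <;> rfl
  have h0 : (N.updateRow (Sum.inl k) (N (Sum.inr i))).det = 0 := by
    refine Matrix.det_zero_of_row_eq (i := Sum.inl k) (j := Sum.inr i) (by simp) ?_
    rw [Matrix.updateRow_self, Matrix.updateRow_ne (by simp)]
  rw [qker_eq_det, qker_eq_det, hMN, Matrix.det_updateRow_add,
    Matrix.det_updateRow_smul, Matrix.updateRow_eq_self, h0, ← hN]
  ring

/-- forward differences of `q_t^n` in the `x`-coordinates of the
starting point vanish on the boundaries `x_i = y_i` and `x_{i+1} = y_i`. -/
theorem qker_forwardDiff_vanishes (n t : ℕ) (x x' : Fin (n+1) → ℤ)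
    (y y' : Fin n → ℤ) (i : Fin n) :
    (x i.castSucc = y i →
      qker n t (Function.update x i.castSucc (x i.castSucc + 1)) y x' y'
        - qker n t x y x' y' = 0) ∧
    (x i.succ = y i →
      qker n t (Function.update x i.succ (x i.succ + 1)) y x' y'
        - qker n t x y x' y' = 0) := by
  exact ⟨fun h => qker_diff_aux n t x x' y y' i.castSucc i h,
    fun h => qker_diff_aux n t x x' y y' i.succ i h⟩
end

section
/- The deterministic initial condition and dynamics preserve interlacing: if integers X^{k}_i(t−1) satisfy X^k_i(t−1) ≤ X^{k−1}_i(t−1) < X^k_{i+1}(t−1) for all applicable i, k, and each particle is updated by X^j_i(t) = X^j_i(t−1) + β^j_i(t) − 1{X^j_i(t−1)+β^j_i(t) = X^{j−1}_i(t)+1} + 1{X^j_i(t−1)+β^j_i(t) = X^{j−1}_{i−1}(t)} (with the indicator terms absent when the corresponding index is out of range), where each β^j_i(t) ∈ {0,1} and lines are updated in order of increasing j, then the updated configuration again satisfies X^k_i(t) ≤ X^{k−1}_i(t) < X^k_{i+1}(t) for all applicable i, k. -/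
/-- Interlacing for an array of lines: row `k` (0-based) represents `X^{k+1}`
and has `k+1` particles; the condition is `X^k_i ≤ X^{k-1}_i < X^k_{i+1}`. -/
def arrInterlace (m : ℕ) (X : (k : Fin m) → Fin ((k : ℕ)+1) → ℤ) : Prop :=
  ∀ (k : ℕ) (hk : k + 1 < m) (i : Fin (k+1)),
    X ⟨k+1, hk⟩ i.castSucc ≤ X ⟨k, by omega⟩ i ∧
    X ⟨k, by omega⟩ i < X ⟨k+1, hk⟩ i.succ

/-- the shuffling dynamics preserves interlacing, for any choice of
the Bernoulli variables `β`.  Line `k` is updated using the already updated line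
`k-1`; the pushing indicator terms are absent at out-of-range indices. -/
theorem dynamics_preserves_interlacing (m : ℕ)
    (X Y β : (k : Fin m) → Fin ((k : ℕ)+1) → ℤ)
    (hβ : ∀ k i, β k i = 0 ∨ β k i = 1)
    (hX : arrInterlace m X)
    (hY : ∀ (k : ℕ) (hk : k < m) (i : Fin (k+1)),
      Y ⟨k, hk⟩ i = X ⟨k, hk⟩ i + β ⟨k, hk⟩ i
        - (if h : (i : ℕ) < k then
            (if X ⟨k, hk⟩ i + β ⟨k, hk⟩ i
                = Y ⟨k-1, by omega⟩ ⟨(i : ℕ), by show (i : ℕ) < k - 1 + 1; omega⟩ + 1 then 1 else 0)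
          else 0)
        + (if h : 1 ≤ (i : ℕ) then
            (if X ⟨k, hk⟩ i + β ⟨k, hk⟩ i
                = Y ⟨k-1, by omega⟩ ⟨(i : ℕ) - 1, by show (i : ℕ) - 1 < k - 1 + 1; omega⟩ then 1 else 0)
          else 0)) :
    arrInterlace m Y := by
  have hcongr : ∀ (f : (k : Fin m) → Fin ((k : ℕ)+1) → ℤ) (a b : ℕ)
      (ha : a < m) (hb : b < m) (i j : ℕ) (hi : i < a+1) (hj : j < b+1),
      a = b → i = j → f ⟨a, ha⟩ ⟨i, hi⟩ = f ⟨b, hb⟩ ⟨j, hj⟩ := by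
    rintro f a b ha hb i j hi hj rfl rfl; rfl
  have key : ∀ k (hk : k < m),
      (∀ (j : ℕ) (hj : j < k+1),
        X ⟨k, hk⟩ ⟨j, hj⟩ ≤ Y ⟨k, hk⟩ ⟨j, hj⟩ ∧
        Y ⟨k, hk⟩ ⟨j, hj⟩ ≤ X ⟨k, hk⟩ ⟨j, hj⟩ + 1) ∧
      (∀ (j : ℕ) (hj : j < k+1),
        (∀ h : j < k, Y ⟨k, hk⟩ ⟨j, hj⟩ ≤ Y ⟨k-1, by omega⟩ ⟨j, by show j < k-1+1; omega⟩) ∧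
        (∀ h : 1 ≤ j, Y ⟨k-1, by omega⟩ ⟨j-1, by show j-1 < k-1+1; omega⟩ < Y ⟨k, hk⟩ ⟨j, hj⟩)) := by
    intro k
    induction k using Nat.strong_induction_on with
    | _ k IH =>
      intro hk
      have main : ∀ (j : ℕ) (hj : j < k+1),
          (X ⟨k, hk⟩ ⟨j, hj⟩ ≤ Y ⟨k, hk⟩ ⟨j, hj⟩ ∧
           Y ⟨k, hk⟩ ⟨j, hj⟩ ≤ X ⟨k, hk⟩ ⟨j, hj⟩ + 1) ∧
          (∀ h : j < k, Y ⟨k, hk⟩ ⟨j, hj⟩ ≤ Y ⟨k-1, by omega⟩ ⟨j, by show j < k-1+1; omega⟩) ∧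
          (∀ h : 1 ≤ j, Y ⟨k-1, by omega⟩ ⟨j-1, by show j-1 < k-1+1; omega⟩ < Y ⟨k, hk⟩ ⟨j, hj⟩) := by
        intro j hj
        have hb := hβ ⟨k, hk⟩ ⟨j, hj⟩
        rcases Nat.eq_zero_or_pos k with hk0 | hk0
        · subst hk0
          have hj0 : j = 0 := by omega
          subst hj0
          have hYk : Y ⟨0, hk⟩ ⟨0, hj⟩ = X ⟨0, hk⟩ ⟨0, hj⟩ + β ⟨0, hk⟩ ⟨0, hj⟩ := by
            have := hY 0 hk ⟨0, hj⟩
            simpa using this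
          exact ⟨⟨by omega, by omega⟩, fun h => absurd h (by omega),
            fun h => absurd h (by omega)⟩
        · have hk1m : k - 1 < m := by omega
          obtain ⟨P1, P2⟩ := IH (k-1) (by omega) hk1m
          have hXpair := hX (k-1) (by omega : k-1+1 < m)
          have hjk1' : j - 1 < k - 1 + 1 := by omega
          have hYk : Y ⟨k, hk⟩ ⟨j, hj⟩ = X ⟨k, hk⟩ ⟨j, hj⟩ + β ⟨k, hk⟩ ⟨j, hj⟩
              - (if h : j < k then
                  (if X ⟨k, hk⟩ ⟨j, hj⟩ + β ⟨k, hk⟩ ⟨j, hj⟩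
                      = Y ⟨k-1, hk1m⟩ ⟨j, by show j < k-1+1; omega⟩ + 1 then 1 else 0)
                else 0)
              + (if h : 1 ≤ j then
                  (if X ⟨k, hk⟩ ⟨j, hj⟩ + β ⟨k, hk⟩ ⟨j, hj⟩
                      = Y ⟨k-1, hk1m⟩ ⟨j-1, hjk1'⟩ then 1 else 0)
                else 0) := hY k hk ⟨j, hj⟩
          by_cases hc1 : j < k
          · have hjk1 : j < k - 1 + 1 := by omega
            have hu := P1 j hjk1
            have hxu : X ⟨k, hk⟩ ⟨j, hj⟩ ≤ X ⟨k-1, hk1m⟩ ⟨j, hjk1⟩ :=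
              le_trans (le_of_eq (hcongr X k (k-1+1) hk (by omega) j j hj (by omega)
                (by omega) rfl)) (hXpair ⟨j, hjk1⟩).1
            rw [dif_pos hc1] at hYk
            by_cases hc2 : 1 ≤ j
            · have hv := P1 (j-1) hjk1'
              have hvx : X ⟨k-1, hk1m⟩ ⟨j-1, hjk1'⟩ < X ⟨k, hk⟩ ⟨j, hj⟩ :=
                lt_of_lt_of_le (hXpair ⟨j-1, hjk1'⟩).2
                  (le_of_eq (hcongr X (k-1+1) k (by omega) hk (j-1+1) j (by omega) hj
                    (by omega) (by omega)))
              have hvu : Y ⟨k-1, hk1m⟩ ⟨j-1, hjk1'⟩ < Y ⟨k-1, hk1m⟩ ⟨j, hjk1⟩ :=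
                lt_of_le_of_lt ((P2 (j-1) hjk1').1 (by omega)) ((P2 j hjk1).2 hc2)
              rw [dif_pos hc2] at hYk
              by_cases e1 : X ⟨k, hk⟩ ⟨j, hj⟩ + β ⟨k, hk⟩ ⟨j, hj⟩
                  = Y ⟨k-1, hk1m⟩ ⟨j, hjk1⟩ + 1
              · rw [if_pos e1, if_neg (by omega)] at hYk
                refine ⟨⟨by omega, by omega⟩, fun h => ?_, fun h => ?_⟩
                · show Y ⟨k, hk⟩ ⟨j, hj⟩ ≤ Y ⟨k-1, hk1m⟩ ⟨j, hjk1⟩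
                  omega
                · show Y ⟨k-1, hk1m⟩ ⟨j-1, hjk1'⟩ < Y ⟨k, hk⟩ ⟨j, hj⟩
                  omega
              · rw [if_neg e1] at hYk
                by_cases e2 : X ⟨k, hk⟩ ⟨j, hj⟩ + β ⟨k, hk⟩ ⟨j, hj⟩
                    = Y ⟨k-1, hk1m⟩ ⟨j-1, hjk1'⟩
                · rw [if_pos e2] at hYk
                  refine ⟨⟨by omega, by omega⟩, fun h => ?_, fun h => ?_⟩
                  · show Y ⟨k, hk⟩ ⟨j, hj⟩ ≤ Y ⟨k-1, hk1m⟩ ⟨j, hjk1⟩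
                    omega
                  · show Y ⟨k-1, hk1m⟩ ⟨j-1, hjk1'⟩ < Y ⟨k, hk⟩ ⟨j, hj⟩
                    omega
                · rw [if_neg e2] at hYk
                  refine ⟨⟨by omega, by omega⟩, fun h => ?_, fun h => ?_⟩
                  · show Y ⟨k, hk⟩ ⟨j, hj⟩ ≤ Y ⟨k-1, hk1m⟩ ⟨j, hjk1⟩
                    omega
                  · show Y ⟨k-1, hk1m⟩ ⟨j-1, hjk1'⟩ < Y ⟨k, hk⟩ ⟨j, hj⟩
                    omega
            · rw [dif_neg hc2] at hYk
              by_cases e1 : X ⟨k, hk⟩ ⟨j, hj⟩ + β ⟨k, hk⟩ ⟨j, hj⟩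
                  = Y ⟨k-1, hk1m⟩ ⟨j, hjk1⟩ + 1
              · rw [if_pos e1] at hYk
                refine ⟨⟨by omega, by omega⟩, fun h => ?_, fun h => absurd h hc2⟩
                show Y ⟨k, hk⟩ ⟨j, hj⟩ ≤ Y ⟨k-1, hk1m⟩ ⟨j, hjk1⟩
                omega
              · rw [if_neg e1] at hYk
                refine ⟨⟨by omega, by omega⟩, fun h => ?_, fun h => absurd h hc2⟩
                show Y ⟨k, hk⟩ ⟨j, hj⟩ ≤ Y ⟨k-1, hk1m⟩ ⟨j, hjk1⟩
                omega
          · have hc2 : 1 ≤ j := by omega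
            have hv := P1 (j-1) hjk1'
            have hvx : X ⟨k-1, hk1m⟩ ⟨j-1, hjk1'⟩ < X ⟨k, hk⟩ ⟨j, hj⟩ :=
              lt_of_lt_of_le (hXpair ⟨j-1, hjk1'⟩).2
                (le_of_eq (hcongr X (k-1+1) k (by omega) hk (j-1+1) j (by omega) hj
                  (by omega) (by omega)))
            rw [dif_neg hc1, dif_pos hc2] at hYk
            by_cases e2 : X ⟨k, hk⟩ ⟨j, hj⟩ + β ⟨k, hk⟩ ⟨j, hj⟩
                = Y ⟨k-1, hk1m⟩ ⟨j-1, hjk1'⟩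
            · rw [if_pos e2] at hYk
              refine ⟨⟨by omega, by omega⟩, fun h => absurd h hc1, fun h => ?_⟩
              show Y ⟨k-1, hk1m⟩ ⟨j-1, hjk1'⟩ < Y ⟨k, hk⟩ ⟨j, hj⟩
              omega
            · rw [if_neg e2] at hYk
              refine ⟨⟨by omega, by omega⟩, fun h => absurd h hc1, fun h => ?_⟩
              show Y ⟨k-1, hk1m⟩ ⟨j-1, hjk1'⟩ < Y ⟨k, hk⟩ ⟨j, hj⟩
              omega
      exact ⟨fun j hj => (main j hj).1, fun j hj => (main j hj).2⟩
  intro k hk i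
  obtain ⟨H1, H2⟩ := key (k+1) hk
  constructor
  · have h := (H2 i.val (by omega)).1 (by omega)
    show Y ⟨k+1, hk⟩ ⟨i.val, by show (i:ℕ) < k+1+1; omega⟩ ≤ Y ⟨k, by omega⟩ ⟨i.val, by show (i:ℕ) < k+1; omega⟩
    exact h
  · have h := (H2 (i.val+1) (by omega)).2 (by omega)
    show Y ⟨k, by omega⟩ ⟨i.val, by show (i:ℕ) < k+1; omega⟩ < Y ⟨k+1, hk⟩ ⟨i.val+1, by show (i:ℕ)+1 < k+1+1; omega⟩
    exact h
end
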